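/- Fix a nonzero constant c and define x : I × ℝ → R^3 by x(s,t) = (1/c)·(arcsinh(cs), sqrt(c²s² + 1) cosh t, sqrt(c²s² + 1) sinh t). Then x is an immersion into Minkowski 3-space whose induced metric is Lorentzian (the surface is timelike), and its mean curvature vanishes identically (the surface is minimal). -/

import Mathlib

noncomputable section

/-- The Minkowski bilinear form on `ℝ³ = ℝ × ℝ × ℝ`. -/
def mink (v w : ℝ × ℝ × ℝ) : ℝ :=
  v.1 * w.1 + v.2.1 * w.2.1 - v.2.2 * w.2.2

/-- Partial derivative in the first variable of an `ℝ³`-valued map. -/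
def pds (f : ℝ → ℝ → ℝ × ℝ × ℝ) (s t : ℝ) : ℝ × ℝ × ℝ :=
  (deriv (fun σ => (f σ t).1) s,
   deriv (fun σ => (f σ t).2.1) s,
   deriv (fun σ => (f σ t).2.2) s)

/-- Partial derivative in the second variable of an `ℝ³`-valued map. -/
def pdt (f : ℝ → ℝ → ℝ × ℝ × ℝ) (s t : ℝ) : ℝ × ℝ × ℝ :=
  (deriv (fun τ => (f s τ).1) t,
   deriv (fun τ => (f s τ).2.1) t,
   deriv (fun τ => (f s τ).2.2) t)

/-- The minimal CPD surface of the first kind. -/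
def xsurf (c : ℝ) (s t : ℝ) : ℝ × ℝ × ℝ :=
  ((1 / c) * Real.arsinh (c * s),
   (1 / c) * (Real.sqrt (c ^ 2 * s ^ 2 + 1) * Real.cosh t),
   (1 / c) * (Real.sqrt (c ^ 2 * s ^ 2 + 1) * Real.sinh t))

lemma wpos (c s : ℝ) : 0 < Real.sqrt (c ^ 2 * s ^ 2 + 1) :=
  Real.sqrt_pos.2 (by positivity)

lemma wsq (c s : ℝ) : Real.sqrt (c ^ 2 * s ^ 2 + 1) ^ 2 = c ^ 2 * s ^ 2 + 1 :=
  Real.sq_sqrt (by positivity)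

lemma hDw (c s : ℝ) : HasDerivAt (fun σ : ℝ => Real.sqrt (c ^ 2 * σ ^ 2 + 1))
    (c ^ 2 * s / Real.sqrt (c ^ 2 * s ^ 2 + 1)) s := by
  have h1 : HasDerivAt (fun σ : ℝ => c ^ 2 * σ ^ 2 + 1) (c ^ 2 * (2 * s)) s := by
    have := ((hasDerivAt_pow 2 s).const_mul (c ^ 2)).add_const 1
    exact this.congr_deriv (by norm_num)
  have h2 := (Real.hasDerivAt_sqrt (by positivity : c ^ 2 * s ^ 2 + (1:ℝ) ≠ 0)).comp s h1
  have := (wpos c s).ne'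
  exact h2.congr_deriv (by field_simp)

lemma pds_xsurf_pt (c : ℝ) (hc : c ≠ 0) (s t : ℝ) :
    pds (xsurf c) s t =
      (1 / Real.sqrt (c ^ 2 * s ^ 2 + 1),
       c * s * Real.cosh t / Real.sqrt (c ^ 2 * s ^ 2 + 1),
       c * s * Real.sinh t / Real.sqrt (c ^ 2 * s ^ 2 + 1)) := by
  have hw := (wpos c s).ne'
  have hw2 := wsq c s
  unfold pds xsurf
  refine Prod.ext ?_ (Prod.ext ?_ ?_) <;> simp only
  · have h : HasDerivAt (fun σ : ℝ => (1 / c) * Real.arsinh (c * σ))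
        ((1 / c) * ((Real.sqrt (1 + (c * s) ^ 2))⁻¹ • c)) s := by
      have := (((hasDerivAt_id s).const_mul c).arsinh).const_mul (1 / c)
      simpa using this
    rw [h.deriv]
    rw [show (1 : ℝ) + (c * s) ^ 2 = c ^ 2 * s ^ 2 + 1 by ring]
    simp only [smul_eq_mul]
    field_simp
  · have h : HasDerivAt (fun σ : ℝ => (1 / c) * (Real.sqrt (c ^ 2 * σ ^ 2 + 1) * Real.cosh t))
        ((1 / c) * (c ^ 2 * s / Real.sqrt (c ^ 2 * s ^ 2 + 1) * Real.cosh t)) s :=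
      ((hDw c s).mul_const (Real.cosh t)).const_mul (1 / c)
    rw [h.deriv]
    field_simp
  · have h : HasDerivAt (fun σ : ℝ => (1 / c) * (Real.sqrt (c ^ 2 * σ ^ 2 + 1) * Real.sinh t))
        ((1 / c) * (c ^ 2 * s / Real.sqrt (c ^ 2 * s ^ 2 + 1) * Real.sinh t)) s :=
      ((hDw c s).mul_const (Real.sinh t)).const_mul (1 / c)
    rw [h.deriv]
    field_simp

lemma pdt_xsurf_pt (c : ℝ) (s t : ℝ) :
    pdt (xsurf c) s t =
      (0,
       Real.sqrt (c ^ 2 * s ^ 2 + 1) / c * Real.sinh t,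
       Real.sqrt (c ^ 2 * s ^ 2 + 1) / c * Real.cosh t) := by
  unfold pdt xsurf
  refine Prod.ext ?_ (Prod.ext ?_ ?_) <;> simp only
  · simp
  · have h : HasDerivAt (fun τ : ℝ => (1 / c) * (Real.sqrt (c ^ 2 * s ^ 2 + 1) * Real.cosh τ))
        ((1 / c) * (Real.sqrt (c ^ 2 * s ^ 2 + 1) * Real.sinh t)) t :=
      ((Real.hasDerivAt_cosh t).const_mul (Real.sqrt (c ^ 2 * s ^ 2 + 1))).const_mul (1 / c)
    rw [h.deriv]; ring
  · have h : HasDerivAt (fun τ : ℝ => (1 / c) * (Real.sqrt (c ^ 2 * s ^ 2 + 1) * Real.sinh τ))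
        ((1 / c) * (Real.sqrt (c ^ 2 * s ^ 2 + 1) * Real.cosh t)) t :=
      ((Real.hasDerivAt_sinh t).const_mul (Real.sqrt (c ^ 2 * s ^ 2 + 1))).const_mul (1 / c)
    rw [h.deriv]; ring


lemma pds_xsurf (c : ℝ) (hc : c ≠ 0) :
    pds (xsurf c) = fun s t =>
      (1 / Real.sqrt (c ^ 2 * s ^ 2 + 1),
       c * s * Real.cosh t / Real.sqrt (c ^ 2 * s ^ 2 + 1),
       c * s * Real.sinh t / Real.sqrt (c ^ 2 * s ^ 2 + 1)) := by
  funext s t; exact pds_xsurf_pt c hc s t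

lemma pdt_xsurf (c : ℝ) :
    pdt (xsurf c) = fun s t =>
      (0,
       Real.sqrt (c ^ 2 * s ^ 2 + 1) / c * Real.sinh t,
       Real.sqrt (c ^ 2 * s ^ 2 + 1) / c * Real.cosh t) := by
  funext s t; exact pdt_xsurf_pt c s t

lemma pds_pds_xsurf (c : ℝ) (hc : c ≠ 0) (s t : ℝ) :
    pds (pds (xsurf c)) s t =
      (-(c ^ 2 * s) / Real.sqrt (c ^ 2 * s ^ 2 + 1) ^ 3,
       c * Real.cosh t / Real.sqrt (c ^ 2 * s ^ 2 + 1) ^ 3,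
       c * Real.sinh t / Real.sqrt (c ^ 2 * s ^ 2 + 1) ^ 3) := by
  have hw := fun σ => (wpos c σ).ne'
  have hw2 := wsq c s
  conv_lhs => rw [pds_xsurf c hc]
  unfold pds
  refine Prod.ext ?_ (Prod.ext ?_ ?_) <;> simp only
  ·
    have h : HasDerivAt (fun σ : ℝ => 1 / Real.sqrt (c ^ 2 * σ ^ 2 + 1))
        ((0 * Real.sqrt (c ^ 2 * s ^ 2 + 1) - 1 * (c ^ 2 * s / Real.sqrt (c ^ 2 * s ^ 2 + 1))) /
          Real.sqrt (c ^ 2 * s ^ 2 + 1) ^ 2) s :=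
      (hasDerivAt_const s 1).div (hDw c s) (hw s)
    rw [h.deriv]
    rw [div_eq_div_iff (by positivity) (by positivity)]
    rw [show Real.sqrt (c^2*s^2+1) ^ 3 = Real.sqrt (c^2*s^2+1) ^ 2 * Real.sqrt (c^2*s^2+1) by ring]
    field_simp
    ring
  ·
    have h : HasDerivAt (fun σ : ℝ => c * σ * Real.cosh t / Real.sqrt (c ^ 2 * σ ^ 2 + 1))
        ((c * 1 * Real.cosh t * Real.sqrt (c ^ 2 * s ^ 2 + 1) -
            c * s * Real.cosh t * (c ^ 2 * s / Real.sqrt (c ^ 2 * s ^ 2 + 1))) /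
          Real.sqrt (c ^ 2 * s ^ 2 + 1) ^ 2) s := by
      exact (((hasDerivAt_id s).const_mul c).mul_const (Real.cosh t)).div (hDw c s) (hw s)
    rw [h.deriv]
    rw [div_eq_div_iff (by positivity) (by positivity)]
    have h3 : Real.sqrt (c^2*s^2+1) ^ 3 = Real.sqrt (c^2*s^2+1) ^ 2 * Real.sqrt (c^2*s^2+1) := by ring
    rw [h3]
    field_simp
    linear_combination hw2
  ·
    have h : HasDerivAt (fun σ : ℝ => c * σ * Real.sinh t / Real.sqrt (c ^ 2 * σ ^ 2 + 1))
        ((c * 1 * Real.sinh t * Real.sqrt (c ^ 2 * s ^ 2 + 1) -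
            c * s * Real.sinh t * (c ^ 2 * s / Real.sqrt (c ^ 2 * s ^ 2 + 1))) /
          Real.sqrt (c ^ 2 * s ^ 2 + 1) ^ 2) s := by
      exact (((hasDerivAt_id s).const_mul c).mul_const (Real.sinh t)).div (hDw c s) (hw s)
    rw [h.deriv]
    rw [div_eq_div_iff (by positivity) (by positivity)]
    have h3 : Real.sqrt (c^2*s^2+1) ^ 3 = Real.sqrt (c^2*s^2+1) ^ 2 * Real.sqrt (c^2*s^2+1) := by ring
    rw [h3]
    field_simp
    linear_combination (Real.sinh t) * hw2

lemma pdt_pds_xsurf (c : ℝ) (hc : c ≠ 0) (s t : ℝ) :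
    pdt (pds (xsurf c)) s t =
      (0,
       c * s * Real.sinh t / Real.sqrt (c ^ 2 * s ^ 2 + 1),
       c * s * Real.cosh t / Real.sqrt (c ^ 2 * s ^ 2 + 1)) := by
  conv_lhs => rw [pds_xsurf c hc]
  unfold pdt
  refine Prod.ext ?_ (Prod.ext ?_ ?_) <;> simp only
  · simp
  · have h : HasDerivAt (fun τ : ℝ => c * s * Real.cosh τ / Real.sqrt (c ^ 2 * s ^ 2 + 1))
        (c * s * Real.sinh t / Real.sqrt (c ^ 2 * s ^ 2 + 1)) t :=
      ((Real.hasDerivAt_cosh t).const_mul (c * s)).div_const _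
    rw [h.deriv]
  · have h : HasDerivAt (fun τ : ℝ => c * s * Real.sinh τ / Real.sqrt (c ^ 2 * s ^ 2 + 1))
        (c * s * Real.cosh t / Real.sqrt (c ^ 2 * s ^ 2 + 1)) t :=
      ((Real.hasDerivAt_sinh t).const_mul (c * s)).div_const _
    rw [h.deriv]

lemma pdt_pdt_xsurf (c : ℝ) (s t : ℝ) :
    pdt (pdt (xsurf c)) s t =
      (0,
       Real.sqrt (c ^ 2 * s ^ 2 + 1) / c * Real.cosh t,
       Real.sqrt (c ^ 2 * s ^ 2 + 1) / c * Real.sinh t) := by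
  conv_lhs => rw [pdt_xsurf c]
  unfold pdt
  refine Prod.ext ?_ (Prod.ext ?_ ?_) <;> simp only
  · simp
  · exact ((Real.hasDerivAt_sinh t).const_mul _).deriv
  · exact ((Real.hasDerivAt_cosh t).const_mul _).deriv

set_option maxHeartbeats 1000000 in
theorem stmt_8 (c : ℝ) (hc : c ≠ 0) (s t : ℝ) :
    (mink (pds (xsurf c) s t) (pds (xsurf c) s t) *
         mink (pdt (xsurf c) s t) (pdt (xsurf c) s t) -
       (mink (pds (xsurf c) s t) (pdt (xsurf c) s t)) ^ 2 < 0) ∧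
    ∀ N : ℝ × ℝ × ℝ,
      mink N (pds (xsurf c) s t) = 0 → mink N (pdt (xsurf c) s t) = 0 →
      mink N N = 1 →
      mink (pds (pds (xsurf c)) s t) N * mink (pdt (xsurf c) s t) (pdt (xsurf c) s t)
        - 2 * mink (pdt (pds (xsurf c)) s t) N *
            mink (pds (xsurf c) s t) (pdt (xsurf c) s t)
        + mink (pdt (pdt (xsurf c)) s t) N *
            mink (pds (xsurf c) s t) (pds (xsurf c) s t) = 0 := by
  have hw0 : Real.sqrt (c ^ 2 * s ^ 2 + 1) ≠ 0 := (wpos c s).ne'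
  have hw2 := wsq c s
  have hch := Real.cosh_sq_sub_sinh_sq t
  rw [pds_xsurf_pt c hc s t, pdt_xsurf_pt c s t, pds_pds_xsurf c hc s t,
    pdt_pds_xsurf c hc s t, pdt_pdt_xsurf c s t]
  set w := Real.sqrt (c ^ 2 * s ^ 2 + 1) with hwdef
  clear_value w
  have hE : 1 / w * (1 / w) + c * s * Real.cosh t / w * (c * s * Real.cosh t / w) -
      c * s * Real.sinh t / w * (c * s * Real.sinh t / w) = 1 := by
    field_simp
    linear_combination (c^2*s^2) * hch - hw2
  have hF : 1 / w * 0 + c * s * Real.cosh t / w * (w / c * Real.sinh t) -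
      c * s * Real.sinh t / w * (w / c * Real.cosh t) = 0 := by
    field_simp; ring
  have hG : (0:ℝ) * 0 + w / c * Real.sinh t * (w / c * Real.sinh t) -
      w / c * Real.cosh t * (w / c * Real.cosh t) = -(w ^ 2 / c ^ 2) := by
    field_simp
    linear_combination (-w^2) * hch
  constructor
  · simp only [mink]
    rw [hE, hF, hG]
    have : 0 < w ^ 2 / c ^ 2 := by positivity
    nlinarith
  · rintro ⟨n1, n2, n3⟩ hN1 hN2 _
    simp only [mink] at hN1 hN2 ⊢
    rw [hE, hF, hG]
    field_simp at hN1 ⊢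
    linear_combination (c*s) * hN1 +
      (n2*Real.cosh t - n3*Real.sinh t) * hw2
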